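/- Let P be a symmetric n×n matrix with non-negative integer entries and strictly positive diagonal entries, with tr(P) ≥ 2, and let G' = (V', E') be a finite connected simple graph with |V'| = tr(P). Define the n×n rational matrix M = (m_ij) by m_ii = p_ii / |V'| for all i and m_ij = p_ij / p_ii for all i ≠ j. Then M is an endorsement pattern over G' (i.e., there exists an endorsement configuration D_1, …, D_n on G' whose endorsed sets E_1, …, E_n satisfy |E_i| / |V'| = m_ii for all i and |E_i ∩ E_j| / |E_i| = m_ij for all i ≠ j) if and only if P is an intersection pattern (i.e., there exist finite sets S_1, …, S_n with |S_i ∩ S_j| = p_ij for all 1 ≤ i, j ≤ n). -/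
import Mathlib


/-- The set of vertices endorsed by an endorsement digraph `D`
(a finite set of ordered pairs of vertices): those vertices with
positive in-degree, i.e. the image of `D` under the second projection. -/
def endorsedSet {V : Type*} [DecidableEq V] (D : Finset (V × V)) : Finset V :=
  D.image Prod.snd

/-- Let `P` be a symmetric `n × n` matrix of non-negative integers with
strictly positive diagonal and `tr(P) ≥ 2`, and let `G'` be a finite connected
simple graph on `tr(P)` vertices.  The rational matrix `M` defined by
`m_ii = p_ii / |V'|` and `m_ij = p_ij / p_ii` (for `i ≠ j`) is an endorsement
pattern over `G'` if and only if `P` is an intersection pattern. -/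
theorem endorsement_pattern_iff_intersection_pattern
    (n : ℕ) (P : Matrix (Fin n) (Fin n) ℕ) (hP : P.IsSymm)
    (hdiag : ∀ i, 0 < P i i) (htr : 2 ≤ ∑ i, P i i)
    (V' : Type*) [Fintype V'] [DecidableEq V'] (G' : SimpleGraph V')
    (hconn : G'.Connected) (hcard : Fintype.card V' = ∑ i, P i i)
    (M : Matrix (Fin n) (Fin n) ℚ)
    (hMdiag : ∀ i, M i i = (P i i : ℚ) / (Fintype.card V' : ℚ))
    (hMoff : ∀ i j, i ≠ j → M i j = (P i j : ℚ) / (P i i : ℚ)) :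
    (∃ D : Fin n → Finset (V' × V'),
        (∀ i, ∀ p ∈ D i, G'.Adj p.1 p.2) ∧
        (∀ i, ((endorsedSet (D i)).card : ℚ) / (Fintype.card V' : ℚ) = M i i) ∧
        (∀ i j, i ≠ j →
          ((endorsedSet (D i) ∩ endorsedSet (D j)).card : ℚ) /
            ((endorsedSet (D i)).card : ℚ) = M i j)) ↔
    (∃ (α : Type) (_ : DecidableEq α) (S : Fin n → Finset α),
        ∀ i j : Fin n, (S i ∩ S j).card = P i j) := by
  have hVcard : 2 ≤ Fintype.card V' := hcard ▸ htr
  have hVQ : (Fintype.card V' : ℚ) ≠ 0 := by positivity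
  constructor
  · rintro ⟨D, -, h2, h3⟩
    -- the endorsed sets have the right cardinalities
    have hEi : ∀ i, (endorsedSet (D i)).card = P i i := by
      intro i
      have h := (h2 i).trans (hMdiag i)
      rw [div_eq_div_iff hVQ hVQ] at h
      have : ((endorsedSet (D i)).card : ℚ) = (P i i : ℚ) :=
        mul_right_cancel₀ hVQ h
      exact_mod_cast this
    have hEij : ∀ i j, i ≠ j →
        (endorsedSet (D i) ∩ endorsedSet (D j)).card = P i j := by
      intro i j hij
      have h := (h3 i j hij).trans (hMoff i j hij)
      rw [hEi i] at h
      have hPi : (P i i : ℚ) ≠ 0 := by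
        exact_mod_cast (hdiag i).ne'
      rw [div_eq_div_iff hPi hPi] at h
      have : ((endorsedSet (D i) ∩ endorsedSet (D j)).card : ℚ) = (P i j : ℚ) :=
        mul_right_cancel₀ hPi h
      exact_mod_cast this
    -- transfer to `Fin (card V')` which lives in `Type 0`
    let e := Fintype.equivFin V'
    refine ⟨Fin (Fintype.card V'), inferInstance,
      fun i => (endorsedSet (D i)).image e, fun i j => ?_⟩
    rw [← Finset.image_inter _ _ e.injective,
      Finset.card_image_of_injective _ e.injective]
    rcases eq_or_ne i j with rfl | hij
    · simpa using hEi i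
    · exact hEij i j hij
  · rintro ⟨α, _, S, hS⟩
    classical
    -- every vertex of `G'` has a neighbour
    have hnbr : ∀ v : V', ∃ u, G'.Adj u v := by
      intro v
      obtain ⟨u, hu⟩ := Fintype.exists_ne_of_one_lt_card (by omega) v
      obtain ⟨w⟩ := hconn.preconnected v u
      cases w with
      | nil => exact absurd rfl hu
      | cons h _ => exact ⟨_, h.symm⟩
    choose g hg using hnbr
    -- the union of the `S i` fits inside `V'`
    set U : Finset α := Finset.univ.biUnion S with hU
    have hSU : ∀ i, S i ⊆ U := fun i => Finset.subset_biUnion_of_mem S (Finset.mem_univ i)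
    have hUcard : Fintype.card ↥U ≤ Fintype.card V' := by
      rw [Fintype.card_coe, hcard]
      calc U.card ≤ ∑ i, (S i).card := Finset.card_biUnion_le
        _ = ∑ i, P i i := by
            refine Finset.sum_congr rfl fun i _ => ?_
            simpa using hS i i
    obtain ⟨f⟩ := Function.Embedding.nonempty_of_card_le hUcard
    -- the realizing subsets of `V'`
    let T : Fin n → Finset ↥U := fun i => (S i).subtype (· ∈ U)
    let E : Fin n → Finset V' := fun i => (T i).map f
    have hT : ∀ i j, T i ∩ T j = (S i ∩ S j).subtype (· ∈ U) := by
      intro i j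
      ext x
      simp [T, Finset.mem_subtype, and_assoc]
    have hTcard : ∀ i j, (T i ∩ T j).card = P i j := by
      intro i j
      rw [hT, Finset.card_subtype,
        Finset.filter_true_of_mem (fun x hx => hSU i (Finset.mem_inter.1 hx).1)]
      exact hS i j
    have hEcard : ∀ i j, (E i ∩ E j).card = P i j := by
      intro i j
      rw [show E i ∩ E j = (T i ∩ T j).map f from (Finset.map_inter _ _).symm,
        Finset.card_map]
      exact hTcard i j
    -- build the endorsement digraphs
    refine ⟨fun i => (E i).image (fun v => (g v, v)), ?_, ?_, ?_⟩
    · intro i p hp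
      obtain ⟨v, -, rfl⟩ := Finset.mem_image.1 hp
      exact hg v
    all_goals
      have hend : ∀ i, endorsedSet ((E i).image (fun v => (g v, v))) = E i := by
        intro i
        simp only [endorsedSet, Finset.image_image]
        exact Finset.image_id
    · intro i
      rw [hend, hMdiag]
      have := hEcard i i
      simp only [Finset.inter_self] at this
      rw [this]
    · intro i j hij
      rw [hend, hend, hMoff i j hij, hEcard i j]
      have := hEcard i i
      simp only [Finset.inter_self] at this
      rw [this]
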